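/- Let M be a module over ℤ (an abelian group), ι an index type, and for each i ∈ ι let α i ∈ M and f i : M →ₗ[ℤ] ℤ be given with f i (α i) = 2; let s i : M ≃ₗ[ℤ] M denote the associated reflection v ↦ v − (f i v) • (α i). Let l be a natural number and c : Fin l → ι a word. Define β : Fin l → M by β k = (s (c 0) ∘ s (c 1) ∘ ⋯ ∘ s (c (k−1))) (α (c k)) (so β 0 = α (c 0)). Then the ℤ-submodule of M generated by {β k : k ∈ Fin l} equals the ℤ-submodule generated by {α (c k) : k ∈ Fin l}. -/

import Mathlib

private lemma refl_list_sub_mem {M : Type*} [AddCommGroup M] {ι : Type*}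
    (α : ι → M) (f : ι → (M →ₗ[ℤ] ℤ)) (hf : ∀ i, f i (α i) = 2) (p : Submodule ℤ M) :
    ∀ L : List ι, (∀ i ∈ L, α i ∈ p) → ∀ v : M,
      ((L.map fun i => Module.reflection (hf i)).prod) v - v ∈ p := by
  intro L
  induction L with
  | nil => intro _ v; simp
  | cons i L ih =>
    intro h v
    have hw := ih (fun j hj => h j (List.mem_cons_of_mem _ hj)) v
    set w := ((L.map fun i => Module.reflection (hf i)).prod) v with hwdef
    have h1 : ((List.map (fun i => Module.reflection (hf i)) (i :: L)).prod) v
        = w - f i w • α i := by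
      rw [List.map_cons, List.prod_cons]
      show Module.reflection (hf i) w = _
      rw [Module.reflection_apply]
    rw [h1]
    have h2 : w - f i w • α i - v = (w - v) - f i w • α i := by abel
    rw [h2]
    exact sub_mem hw (Submodule.smul_mem _ _ (h i List.mem_cons_self))

/-- Let `α i` be "roots" and `f i` "coroot functionals" with `f i (α i) = 2`, and let
`s i = Module.reflection (hf i)` be the associated reflections of the `ℤ`-module `M`.
For a word `c : Fin l → ι`, define `β k = (s (c 0) ∘ s (c 1) ∘ ⋯ ∘ s (c (k-1))) (α (c k))`.
Then the `ℤ`-submodule generated by the `β k` equals the `ℤ`-submodule generated by the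
`α (c k)`. -/
theorem span_roots_eq_span_simple_roots {M : Type*} [AddCommGroup M] {ι : Type*}
    (α : ι → M) (f : ι → (M →ₗ[ℤ] ℤ)) (hf : ∀ i, f i (α i) = 2)
    (l : ℕ) (c : Fin l → ι) (β : Fin l → M)
    (hβ : ∀ k : Fin l,
      β k = (List.ofFn fun j : Fin k.val =>
          Module.reflection (hf (c ⟨j.val, j.isLt.trans k.isLt⟩))).prod (α (c k))) :
    Submodule.span ℤ (Set.range β) = Submodule.span ℤ (Set.range fun k => α (c k)) := by
  -- rewrite the list of reflections as a map over a list of indices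
  have hβ' : ∀ k : Fin l,
      β k = ((List.ofFn fun j : Fin k.val => c ⟨j.val, j.isLt.trans k.isLt⟩).map
          (fun i => Module.reflection (hf i))).prod (α (c k)) := by
    intro k
    rw [hβ k, List.map_ofFn]
    rfl
  have key : ∀ k : Fin l, β k - α (c k) ∈
      Submodule.span ℤ ((fun j : Fin k.val => α (c ⟨j.val, j.isLt.trans k.isLt⟩)) '' Set.univ) := by
    intro k
    rw [hβ' k]
    apply refl_list_sub_mem α f hf
    intro i hi
    rw [List.mem_ofFn] at hi
    obtain ⟨j, rfl⟩ := hi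
    exact Submodule.subset_span ⟨j, Set.mem_univ j, rfl⟩
  apply le_antisymm
  · rw [Submodule.span_le]
    rintro _ ⟨k, rfl⟩
    have hk := key k
    have hmono : Submodule.span ℤ
        ((fun j : Fin k.val => α (c ⟨j.val, j.isLt.trans k.isLt⟩)) '' Set.univ)
        ≤ Submodule.span ℤ (Set.range fun k => α (c k)) := by
      apply Submodule.span_mono
      rintro _ ⟨j, -, rfl⟩
      exact ⟨⟨j.val, j.isLt.trans k.isLt⟩, rfl⟩
    have h1 : β k = (β k - α (c k)) + α (c k) := by abel
    rw [SetLike.mem_coe, h1]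
    exact add_mem (hmono hk) (Submodule.subset_span ⟨k, rfl⟩)
  · have main : ∀ n : ℕ, ∀ k : Fin l, k.val < n →
        α (c k) ∈ Submodule.span ℤ (Set.range β) := by
      intro n
      induction n with
      | zero => intro k hk; omega
      | succ n ih =>
        intro k hk
        have hkk := key k
        have hmono : Submodule.span ℤ
            ((fun j : Fin k.val => α (c ⟨j.val, j.isLt.trans k.isLt⟩)) '' Set.univ)
            ≤ Submodule.span ℤ (Set.range β) := by
          rw [Submodule.span_le]
          rintro _ ⟨j, -, rfl⟩
          exact ih ⟨j.val, j.isLt.trans k.isLt⟩ (show j.val < n by have := j.isLt; omega)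
        have h1 : α (c k) = β k - (β k - α (c k)) := by abel
        rw [h1]
        exact sub_mem (Submodule.subset_span ⟨k, rfl⟩) (hmono hkk)
    rw [Submodule.span_le]
    rintro _ ⟨k, rfl⟩
    exact main (k.val + 1) k (Nat.lt_succ_self _)
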